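/- For all n ≥ 0 and all m ≥ 0, the number of permutations w of {1,…,n} with dep(w) = m equals Σ_p wt(p), where the sum is over all Motzkin paths p of length n with ar(p) = m. Equivalently, Σ_{w ∈ S_n} t^{dep(w)} = Σ_{p ∈ Motz_n} wt(p)·t^{ar(p)} as polynomials in t. -/

import Mathlib

/-- The three kinds of steps of a Motzkin path. -/
inductive Step : Type
  | U : Step
  | D : Step
  | H : Step
deriving DecidableEq
instance instFintypeStep : Fintype Step :=
  ⟨{Step.U, Step.D, Step.H}, fun x => by cases x <;> simp⟩
/-- Number of indices `i` with `i < m` (i.e. in the prefix of length `m`,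
with 0-based indexing) at which the word `p` has the letter `s`. -/
def countIn {n : ℕ} (p : Fin n → Step) (s : Step) (m : ℕ) : ℕ :=
  (Finset.univ.filter (fun i : Fin n => (i : ℕ) < m ∧ p i = s)).card
/-- A word `p` of length `n` over `{U, D, H}` is a Motzkin path if every
prefix contains at least as many `U`'s as `D`'s and the whole word contains
equally many `U`'s and `D`'s. -/
def IsMotzkin {n : ℕ} (p : Fin n → Step) : Prop :=
  (∀ m ≤ n, countIn p Step.D m ≤ countIn p Step.U m) ∧
  countIn p Step.U n = countIn p Step.D n
/-- The map `φ` from permutations of `{1,…,n}` to words over `{U,D,H}`: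
`p_i = U` if `w⁻¹(i) > i < w(i)`, `p_i = D` if `w⁻¹(i) < i > w(i)`,
and `p_i = H` otherwise. -/
def phi {n : ℕ} (w : Equiv.Perm (Fin n)) : Fin n → Step := fun i =>
  if i < w.symm i ∧ i < w i then Step.U
  else if w.symm i < i ∧ w i < i then Step.D
  else Step.H
/-- The height `h_i` of step `i`: the number of `j ≤ i` with `p_j = U` minus
the number of `j ≤ i` with `p_j = D`, increased by `1` when `p_i = D`. -/
def heightAt {n : ℕ} (p : Fin n → Step) (i : Fin n) : ℕ :=
  ((Finset.univ.filter (fun j : Fin n => j ≤ i ∧ p j = Step.U)).card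
    - (Finset.univ.filter (fun j : Fin n => j ≤ i ∧ p j = Step.D)).card)
    + (if p i = Step.D then 1 else 0)
/-- The area below a Motzkin path:
`ar(p) = ∑_{i : p_i = H} h_i + ∑_{i : p_i ∈ {U,D}} (h_i - 1/2)`. -/
def area {n : ℕ} (p : Fin n → Step) : ℚ :=
  (∑ i ∈ Finset.univ.filter (fun i : Fin n => p i = Step.H),
    (heightAt p i : ℚ))
  + ∑ i ∈ Finset.univ.filter (fun i : Fin n => p i = Step.U ∨ p i = Step.D),
      ((heightAt p i : ℚ) - 1/2)
/-- The depth of a permutation `w` of `{1,…,n}`: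
`dep(w) = ∑_{i : w(i) > i} (w(i) - i)`. -/
def dep {n : ℕ} (w : Equiv.Perm (Fin n)) : ℕ :=
  ∑ i ∈ Finset.univ.filter (fun i : Fin n => i < w i), ((w i : ℕ) - (i : ℕ))
/-- The weight of a Motzkin path: the product over all steps of `h_i` for
`U` and `D` steps and of `2h_i + 1` for `H` steps. -/
def wt {n : ℕ} (p : Fin n → Step) : ℕ :=
  ∏ i : Fin n, (if p i = Step.H then 2 * heightAt p i + 1 else heightAt p i)
instance {n : ℕ} : DecidablePred (IsMotzkin (n := n)) := fun p => by
  unfold IsMotzkin countIn; infer_instance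

open Finset

namespace MzAux

variable {n : ℕ}

/-- number of "open" arcs after the first `k` positions of `w`. -/
def opn (w : Equiv.Perm (Fin n)) (k : ℕ) : ℕ :=
  ∑ j : Fin n, (if (j : ℕ) < k ∧ k ≤ ((w j : Fin n) : ℕ) then 1 else 0)

lemma countIn_eq_sum (p : Fin n → Step) (s : Step) (m : ℕ) :
    countIn p s m = ∑ i : Fin n, (if (i : ℕ) < m ∧ p i = s then 1 else 0) := by
  unfold countIn
  rw [Finset.card_filter]

lemma countIn_succ (p : Fin n → Step) (s : Step) (k : ℕ) (hk : k < n) :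
    countIn p s (k+1) = countIn p s k + (if p ⟨k, hk⟩ = s then 1 else 0) := by
  rw [countIn_eq_sum, countIn_eq_sum]
  have key : ∀ i : Fin n, (if (i : ℕ) < k + 1 ∧ p i = s then 1 else 0) =
      (if (i : ℕ) < k ∧ p i = s then 1 else 0)
        + (if i = ⟨k, hk⟩ ∧ p i = s then (1:ℕ) else 0) := by
    intro i
    by_cases hp : p i = s
    · simp only [hp, and_true, Fin.ext_iff]
      split_ifs <;> omega
    · simp [hp]
  rw [Finset.sum_congr rfl (fun i _ => key i), Finset.sum_add_distrib]
  congr 1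
  have key2 : ∀ i : Fin n, (if i = ⟨k, hk⟩ ∧ p i = s then (1:ℕ) else 0)
      = if i = ⟨k, hk⟩ then (if p i = s then 1 else 0) else 0 := by
    intro i
    by_cases hi : i = ⟨k, hk⟩ <;> simp [hi]
  rw [Finset.sum_congr rfl (fun i _ => key2 i), Finset.sum_ite_eq']
  rw [if_pos (Finset.mem_univ _)]

lemma countIn_stable (p : Fin n → Step) (s : Step) (k : ℕ) (hk : n ≤ k) :
    countIn p s k = countIn p s n := by
  rw [countIn_eq_sum, countIn_eq_sum]
  refine Finset.sum_congr rfl fun i _ => ?_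
  have h1 : (i:ℕ) < k := lt_of_lt_of_le i.isLt hk
  simp [h1, i.isLt]

lemma opn_stable (w : Equiv.Perm (Fin n)) (k : ℕ) (hk : n ≤ k) :
    opn w k = 0 := by
  unfold opn
  refine Finset.sum_eq_zero fun j _ => ?_
  have := (w j).isLt
  have : ¬ (k ≤ ((w j : Fin n) : ℕ)) := by omega
  simp [this]

lemma opn_succ (w : Equiv.Perm (Fin n)) (k : ℕ) (hk : k < n) :
    opn w (k+1) + (if ((w.symm ⟨k, hk⟩ : Fin n) : ℕ) < k then 1 else 0)
      = opn w k + (if k < ((w ⟨k, hk⟩ : Fin n) : ℕ) then 1 else 0) := by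
  set x : Fin n := ⟨k, hk⟩ with hx
  have hc : (if ((w.symm x : Fin n) : ℕ) < k then (1:ℕ) else 0)
      = ∑ j : Fin n, (if j = w.symm x ∧ (j:ℕ) < k then 1 else 0) := by
    have key : ∀ j : Fin n, (if j = w.symm x ∧ (j:ℕ) < k then (1:ℕ) else 0)
        = if j = w.symm x then (if (j:ℕ) < k then 1 else 0) else 0 := by
      intro j; by_cases hj : j = w.symm x <;> simp [hj]
    rw [Finset.sum_congr rfl (fun j _ => key j), Finset.sum_ite_eq']
    rw [if_pos (Finset.mem_univ _)]
  have hd : (if k < ((w x : Fin n) : ℕ) then (1:ℕ) else 0)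
      = ∑ j : Fin n, (if j = x ∧ k < ((w j : Fin n) : ℕ) then 1 else 0) := by
    have key : ∀ j : Fin n, (if j = x ∧ k < ((w j : Fin n) : ℕ) then (1:ℕ) else 0)
        = if j = x then (if k < ((w j : Fin n) : ℕ) then 1 else 0) else 0 := by
      intro j; by_cases hj : j = x <;> simp [hj]
    rw [Finset.sum_congr rfl (fun j _ => key j), Finset.sum_ite_eq']
    rw [if_pos (Finset.mem_univ _)]
  rw [hc, hd]
  unfold opn
  rw [← Finset.sum_add_distrib, ← Finset.sum_add_distrib]
  refine Finset.sum_congr rfl fun j _ => ?_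
  have e1 : (j = w.symm x ∧ (j:ℕ) < k) ↔ (((w j : Fin n) : ℕ) = k ∧ (j:ℕ) < k) := by
    rw [Equiv.eq_symm_apply]
    constructor
    · rintro ⟨h1, h2⟩; exact ⟨by rw [h1], h2⟩
    · rintro ⟨h1, h2⟩; exact ⟨Fin.ext h1, h2⟩
  have e2 : (j = x ∧ k < ((w j : Fin n) : ℕ)) ↔ ((j:ℕ) = k ∧ k < ((w j : Fin n) : ℕ)) := by
    constructor
    · rintro ⟨h1, h2⟩; exact ⟨by rw [h1], h2⟩
    · rintro ⟨h1, h2⟩; exact ⟨Fin.ext h1, h2⟩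
  rw [if_congr e1 rfl rfl, if_congr e2 rfl rfl]
  split_ifs <;> omega

/-- Key identity: `#U`'s minus `#D`'s in a prefix of `phi w` equals number of open arcs. -/
lemma countIn_phi (w : Equiv.Perm (Fin n)) (k : ℕ) :
    countIn (phi w) Step.U k = countIn (phi w) Step.D k + opn w k := by
  induction k with
  | zero =>
    simp [countIn_eq_sum, opn]
  | succ k ih =>
    by_cases hk : k < n
    · rw [countIn_succ _ _ k hk, countIn_succ _ _ k hk]
      set x : Fin n := ⟨k, hk⟩ with hx
      have hos := opn_succ w k hk
      set A : ℕ := ((w x : Fin n) : ℕ) with hA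
      set B : ℕ := ((w.symm x : Fin n) : ℕ) with hB
      have hAB : A = k ↔ B = k := by
        constructor
        · intro h
          have h2 : w x = x := Fin.ext h
          have h3 : w.symm x = x := (Equiv.symm_apply_eq w).mpr h2.symm
          rw [hB, h3]
        · intro h
          have h2 : w.symm x = x := Fin.ext h
          have h3 : x = w x := (Equiv.symm_apply_eq w).mp h2
          rw [hA, ← h3]
      have step : (if phi w x = Step.U then (1:ℕ) else 0) + (if B < k then 1 else 0)
          = (if phi w x = Step.D then 1 else 0) + (if k < A then 1 else 0) := by
        unfold phi
        by_cases p1 : k < B ∧ k < A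
        · rw [if_pos (show x < w.symm x ∧ x < w x from ⟨p1.1, p1.2⟩)]
          simp only [reduceCtorEq, if_true, if_false, reduceIte]
          split_ifs <;> omega
        · rw [if_neg (show ¬(x < w.symm x ∧ x < w x) from fun hc => p1 ⟨hc.1, hc.2⟩)]
          by_cases p2 : B < k ∧ A < k
          · rw [if_pos (show w.symm x < x ∧ w x < x from ⟨p2.1, p2.2⟩)]
            simp only [reduceCtorEq, if_true, if_false, reduceIte]
            split_ifs <;> omega
          · rw [if_neg (show ¬(w.symm x < x ∧ w x < x) from fun hc => p2 ⟨hc.1, hc.2⟩)]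
            simp only [reduceCtorEq, if_true, if_false, reduceIte]
            split_ifs <;> omega
      omega
    · push_neg at hk
      have h1 := countIn_stable (phi w) Step.U (k+1) (by omega)
      have h2 := countIn_stable (phi w) Step.D (k+1) (by omega)
      have h3 := countIn_stable (phi w) Step.U k hk
      have h4 := countIn_stable (phi w) Step.D k hk
      have h5 := opn_stable w (k+1) (by omega)
      have h6 := opn_stable w k hk
      omega

lemma isMotzkin_phi (w : Equiv.Perm (Fin n)) : IsMotzkin (phi w) := by
  constructor
  · intro m _
    have := countIn_phi w m
    omega
  · have := countIn_phi w n
    rw [opn_stable w n le_rfl] at this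
    omega

/-- heightAt in terms of countIn. -/
lemma heightAt_eq (p : Fin n → Step) (i : Fin n) :
    heightAt p i = (countIn p Step.U ((i:ℕ)+1) - countIn p Step.D ((i:ℕ)+1))
      + (if p i = Step.D then 1 else 0) := by
  have e : ∀ (st : Step), (Finset.univ.filter (fun j : Fin n => j ≤ i ∧ p j = st))
      = (Finset.univ.filter (fun j : Fin n => (j:ℕ) < (i:ℕ)+1 ∧ p j = st)) := by
    intro st
    apply Finset.filter_congr
    intro j _
    rw [Fin.le_def, Nat.lt_succ_iff]
  unfold heightAt countIn
  rw [e Step.U, e Step.D]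

lemma heightAt_phi (w : Equiv.Perm (Fin n)) (i : Fin n) :
    heightAt (phi w) i = opn w ((i:ℕ)+1) + (if phi w i = Step.D then 1 else 0) := by
  rw [heightAt_eq]
  have := countIn_phi w ((i:ℕ)+1)
  omega

/-- dep as a sum of open-arc counts. -/
lemma dep_eq_sum_opn (w : Equiv.Perm (Fin n)) :
    dep w = ∑ k ∈ Finset.range n, opn w (k+1) := by
  unfold dep opn
  rw [Finset.sum_filter]
  have key : ∀ i : Fin n, (if i < w i then ((w i : Fin n):ℕ) - (i:ℕ) else 0)
      = ∑ k ∈ Finset.range n, (if (i:ℕ) < k + 1 ∧ k + 1 ≤ ((w i : Fin n):ℕ) then 1 else 0) := by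
    intro i
    have hwi : ((w i : Fin n):ℕ) < n := (w i).isLt
    have e1 : ∀ k ∈ Finset.range n, (if (i:ℕ) < k + 1 ∧ k + 1 ≤ ((w i : Fin n):ℕ) then (1:ℕ) else 0)
        = if k ∈ Finset.Ico (i:ℕ) ((w i : Fin n):ℕ) then 1 else 0 := by
      intro k _
      simp only [Finset.mem_Ico]
      split_ifs <;> omega
    rw [Finset.sum_congr rfl e1, Finset.sum_ite_mem, Finset.inter_comm,
      Finset.sum_const, smul_eq_mul, mul_one]
    have hsub : Finset.Ico (i:ℕ) ((w i : Fin n):ℕ) ⊆ Finset.range n := by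
      intro a ha; simp only [Finset.mem_Ico, Finset.mem_range] at *; omega
    rw [Finset.inter_eq_left.mpr hsub, Nat.card_Ico]
    by_cases h : i < w i
    · rw [if_pos h]
    · rw [if_neg h]
      rw [Fin.lt_def] at h
      omega
  rw [Finset.sum_congr rfl (fun i _ => key i), Finset.sum_comm]

lemma countIn_full (p : Fin n → Step) (st : Step) :
    countIn p st n = ∑ i : Fin n, (if p i = st then 1 else 0) := by
  rw [countIn_eq_sum]
  exact Finset.sum_congr rfl fun i _ => by simp [i.isLt]

lemma area_phi (w : Equiv.Perm (Fin n)) : area (phi w) = (dep w : ℚ) := by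
  set p := phi w with hp
  have hsum : ∑ i : Fin n, (if p i = Step.D then (1:ℕ) else 0)
      = ∑ i : Fin n, (if p i = Step.U then (1:ℕ) else 0) := by
    rw [← countIn_full, ← countIn_full]
    exact (isMotzkin_phi w).2.symm
  have key : ∀ i : Fin n, (if p i = Step.H then (heightAt p i : ℚ) else 0)
      + (if p i = Step.U ∨ p i = Step.D then (heightAt p i : ℚ) - 1/2 else 0)
      = (opn w ((i:ℕ)+1) : ℚ)
        + ((if p i = Step.D then (1:ℚ) else 0) - (if p i = Step.U then (1:ℚ) else 0))/2 := by
    intro i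
    have hh := heightAt_phi w i
    rw [← hp] at hh
    cases hpi : p i
    · rw [hpi] at hh
      simp only [reduceCtorEq, if_false, if_true, if_pos (Or.inl rfl)] at *
      rw [hh]
      push_cast
      first
      | (simp only [true_or, or_true, or_false, false_or, if_true]; ring)
      | ring
    · rw [hpi] at hh
      simp only [reduceCtorEq, if_false, if_true, if_pos (Or.inr rfl)] at *
      rw [hh]
      push_cast
      first
      | (simp only [true_or, or_true, or_false, false_or, if_true]; ring)
      | ring
    · rw [hpi] at hh
      simp only [reduceCtorEq, if_false, if_true, or_self] at *
      rw [hh]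
      push_cast
      first
      | (simp only [true_or, or_true, or_false, false_or, if_true]; ring)
      | ring
  unfold area
  rw [Finset.sum_filter, Finset.sum_filter, ← Finset.sum_add_distrib,
    Finset.sum_congr rfl (fun i _ => key i), Finset.sum_add_distrib]
  have hzero : ∑ i : Fin n,
      ((if p i = Step.D then (1:ℚ) else 0) - (if p i = Step.U then (1:ℚ) else 0))/2 = 0 := by
    rw [← Finset.sum_div, Finset.sum_sub_distrib]
    have hD : ∑ i : Fin n, (if p i = Step.D then (1:ℚ) else 0)
        = ((∑ i : Fin n, (if p i = Step.D then (1:ℕ) else 0) : ℕ) : ℚ) := by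
      push_cast
      exact Finset.sum_congr rfl fun i _ => by split_ifs <;> simp
    have hU : ∑ i : Fin n, (if p i = Step.U then (1:ℚ) else 0)
        = ((∑ i : Fin n, (if p i = Step.U then (1:ℕ) else 0) : ℕ) : ℚ) := by
      push_cast
      exact Finset.sum_congr rfl fun i _ => by split_ifs <;> simp
    rw [hD, hU, hsum, sub_self, zero_div]
  rw [hzero, add_zero, dep_eq_sum_opn, ← Fin.sum_univ_eq_sum_range]
  push_cast
  rfl

/-! ### Partial states -/

/-- The pattern of an index in a partial permutation graph. -/
def pat (s : Finset (Fin n × Fin n)) (i : Fin n) : Step :=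
  if (∀ q ∈ s, q.1 = i → i < q.2) ∧ (∀ q ∈ s, q.2 = i → i < q.1) then Step.U
  else if (∃ q ∈ s, q.1 = i ∧ q.2 < i) ∧ (∃ q ∈ s, q.2 = i ∧ q.1 < i) then Step.D
  else Step.H

/-- Valid partial state at level `k` for the word `p`. -/
def ValidS (p : Fin n → Step) (k : ℕ) (s : Finset (Fin n × Fin n)) : Prop :=
  (∀ q ∈ s, ((q.1 : Fin n) : ℕ) < k ∧ ((q.2 : Fin n) : ℕ) < k) ∧
  (∀ q ∈ s, ∀ q' ∈ s, q.1 = q'.1 → q = q') ∧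
  (∀ q ∈ s, ∀ q' ∈ s, q.2 = q'.2 → q = q') ∧
  (∀ i : Fin n, (i : ℕ) < k → pat s i = p i)

noncomputable instance (p : Fin n → Step) (k : ℕ) : DecidablePred (ValidS p k) := fun s =>
  Classical.dec _

/-- Valid states at level `k`. -/
noncomputable def V (p : Fin n → Step) (k : ℕ) : Finset (Finset (Fin n × Fin n)) :=
  Finset.univ.filter (ValidS p k)

/-- Indices `< k` with no outgoing pair. -/
def AS (s : Finset (Fin n × Fin n)) (k : ℕ) : Finset (Fin n) :=
  Finset.univ.filter (fun j => (j:ℕ) < k ∧ ∀ q ∈ s, q.1 ≠ j)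

/-- Indices `< k` with no incoming pair. -/
def BS (s : Finset (Fin n × Fin n)) (k : ℕ) : Finset (Fin n) :=
  Finset.univ.filter (fun j => (j:ℕ) < k ∧ ∀ q ∈ s, q.2 ≠ j)

lemma mem_AS {s : Finset (Fin n × Fin n)} {k : ℕ} {j : Fin n} :
    j ∈ AS s k ↔ (j:ℕ) < k ∧ ∀ q ∈ s, q.1 ≠ j := by
  simp [AS]

lemma mem_BS {s : Finset (Fin n × Fin n)} {k : ℕ} {j : Fin n} :
    j ∈ BS s k ↔ (j:ℕ) < k ∧ ∀ q ∈ s, q.2 ≠ j := by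
  simp [BS]

lemma mem_V {p : Fin n → Step} {k : ℕ} {s : Finset (Fin n × Fin n)} :
    s ∈ V p k ↔ ValidS p k s := by
  simp [V]

lemma pat_eq_U_iff (s : Finset (Fin n × Fin n)) (i : Fin n) :
    pat s i = Step.U ↔ ((∀ q ∈ s, q.1 = i → i < q.2) ∧ (∀ q ∈ s, q.2 = i → i < q.1)) := by
  unfold pat
  by_cases h1 : (∀ q ∈ s, q.1 = i → i < q.2) ∧ (∀ q ∈ s, q.2 = i → i < q.1)
  · rw [if_pos h1]
    exact iff_of_true rfl h1
  · rw [if_neg h1]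
    refine iff_of_false ?_ h1
    split_ifs <;> simp

lemma pat_eq_D_iff (s : Finset (Fin n × Fin n)) (i : Fin n) :
    pat s i = Step.D ↔ (¬ ((∀ q ∈ s, q.1 = i → i < q.2) ∧ (∀ q ∈ s, q.2 = i → i < q.1))
      ∧ ((∃ q ∈ s, q.1 = i ∧ q.2 < i) ∧ (∃ q ∈ s, q.2 = i ∧ q.1 < i))) := by
  unfold pat
  by_cases h1 : (∀ q ∈ s, q.1 = i → i < q.2) ∧ (∀ q ∈ s, q.2 = i → i < q.1)
  · rw [if_pos h1]
    exact iff_of_false (by simp) (fun h => h.1 h1)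
  · rw [if_neg h1]
    by_cases h2 : (∃ q ∈ s, q.1 = i ∧ q.2 < i) ∧ (∃ q ∈ s, q.2 = i ∧ q.1 < i)
    · rw [if_pos h2]
      exact iff_of_true rfl ⟨h1, h2⟩
    · rw [if_neg h2]
      exact iff_of_false (by simp) (fun h => h2 h.2)

lemma pat_eq_H_iff (s : Finset (Fin n × Fin n)) (i : Fin n) :
    pat s i = Step.H ↔ (¬ ((∀ q ∈ s, q.1 = i → i < q.2) ∧ (∀ q ∈ s, q.2 = i → i < q.1))
      ∧ ¬ ((∃ q ∈ s, q.1 = i ∧ q.2 < i) ∧ (∃ q ∈ s, q.2 = i ∧ q.1 < i))) := by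
  unfold pat
  by_cases h1 : (∀ q ∈ s, q.1 = i → i < q.2) ∧ (∀ q ∈ s, q.2 = i → i < q.1)
  · rw [if_pos h1]
    exact iff_of_false (by simp) (fun h => h.1 h1)
  · rw [if_neg h1]
    by_cases h2 : (∃ q ∈ s, q.1 = i ∧ q.2 < i) ∧ (∃ q ∈ s, q.2 = i ∧ q.1 < i)
    · rw [if_pos h2]
      exact iff_of_false (by simp) (fun h => h.2 h2)
    · rw [if_neg h2]
      exact iff_of_true rfl ⟨h1, h2⟩

/-- `pat` only depends on pairs that do not "fly over" `i`. -/
lemma pat_congr (s s' : Finset (Fin n × Fin n)) (i : Fin n)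
    (h : ∀ q : Fin n × Fin n, (q ∈ s ↔ q ∈ s')
      ∨ ((q.1 = i → i < q.2) ∧ (q.2 = i → i < q.1))) :
    pat s i = pat s' i := by
  have c1 : (∀ q ∈ s, q.1 = i → i < q.2) ↔ (∀ q ∈ s', q.1 = i → i < q.2) := by
    constructor <;> intro hc q hq hq1
    · rcases h q with hm | hg
      · exact hc q (hm.mpr hq) hq1
      · exact hg.1 hq1
    · rcases h q with hm | hg
      · exact hc q (hm.mp hq) hq1
      · exact hg.1 hq1
  have c2 : (∀ q ∈ s, q.2 = i → i < q.1) ↔ (∀ q ∈ s', q.2 = i → i < q.1) := by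
    constructor <;> intro hc q hq hq1
    · rcases h q with hm | hg
      · exact hc q (hm.mpr hq) hq1
      · exact hg.2 hq1
    · rcases h q with hm | hg
      · exact hc q (hm.mp hq) hq1
      · exact hg.2 hq1
  have c3 : (∃ q ∈ s, q.1 = i ∧ q.2 < i) ↔ (∃ q ∈ s', q.1 = i ∧ q.2 < i) := by
    constructor <;> rintro ⟨q, hq, hq1, hq2⟩
    · rcases h q with hm | hg
      · exact ⟨q, hm.mp hq, hq1, hq2⟩
      · exact absurd hq2 (not_lt_of_gt (hg.1 hq1))
    · rcases h q with hm | hg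
      · exact ⟨q, hm.mpr hq, hq1, hq2⟩
      · exact absurd hq2 (not_lt_of_gt (hg.1 hq1))
  have c4 : (∃ q ∈ s, q.2 = i ∧ q.1 < i) ↔ (∃ q ∈ s', q.2 = i ∧ q.1 < i) := by
    constructor <;> rintro ⟨q, hq, hq1, hq2⟩
    · rcases h q with hm | hg
      · exact ⟨q, hm.mp hq, hq1, hq2⟩
      · exact absurd hq2 (not_lt_of_gt (hg.2 hq1))
    · rcases h q with hm | hg
      · exact ⟨q, hm.mpr hq, hq1, hq2⟩
      · exact absurd hq2 (not_lt_of_gt (hg.2 hq1))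
  unfold pat
  rw [if_congr (and_congr c1 c2) rfl rfl, if_congr (and_congr c3 c4) rfl rfl]

/-- Remove the pairs touching `x`. -/
def rst (x : Fin n) (s : Finset (Fin n × Fin n)) : Finset (Fin n × Fin n) :=
  s.filter (fun q => q.1 ≠ x ∧ q.2 ≠ x)

lemma mem_rst {x : Fin n} {s : Finset (Fin n × Fin n)} {q : Fin n × Fin n} :
    q ∈ rst x s ↔ q ∈ s ∧ q.1 ≠ x ∧ q.2 ≠ x := by
  simp [rst]

lemma coord_ne {p : Fin n → Step} {k : ℕ} {s : Finset (Fin n × Fin n)}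
    (hs : ValidS p k s) {x : Fin n} (hx : (x : ℕ) = k) :
    ∀ q ∈ s, q.1 ≠ x ∧ q.2 ≠ x := by
  intro q hq
  have hb := hs.1 q hq
  constructor <;> intro h <;> rw [h, hx] at hb <;> omega

lemma rst_eq_self {p : Fin n → Step} {k : ℕ} {s : Finset (Fin n × Fin n)}
    (hs : ValidS p k s) {x : Fin n} (hx : (x : ℕ) = k) : rst x s = s := by
  apply Finset.filter_true_of_mem
  exact coord_ne hs hx

lemma rst_insert_out {x v : Fin n} {s : Finset (Fin n × Fin n)}
    (h : rst x s = s) : rst x (insert (x, v) s) = s := by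
  rw [rst, Finset.filter_insert, if_neg (by simp), ← rst]
  exact h

lemma rst_insert_in {x j : Fin n} {s : Finset (Fin n × Fin n)}
    (h : rst x s = s) : rst x (insert (j, x) s) = s := by
  rw [rst, Finset.filter_insert, if_neg (by simp), ← rst]
  exact h

lemma pat_untouched {s s' : Finset (Fin n × Fin n)} {i x : Fin n} (hix : i < x)
    (h : ∀ q : Fin n × Fin n, (q ∈ s ↔ q ∈ s') ∨ q.1 = x ∨ q.2 = x) :
    pat s i = pat s' i := by
  apply pat_congr
  intro q
  rcases h q with h | h | h
  · exact Or.inl h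
  · refine Or.inr ⟨fun h1 => absurd (h1.symm.trans h) (ne_of_lt hix), fun _ => ?_⟩
    rw [h]
    exact hix
  · refine Or.inr ⟨fun _ => ?_, fun h2 => absurd (h2.symm.trans h) (ne_of_lt hix)⟩
    rw [h]
    exact hix

lemma pairwise_fst_insert {s : Finset (Fin n × Fin n)}
    (hfn : ∀ q ∈ s, ∀ q' ∈ s, q.1 = q'.1 → q = q') {q0 : Fin n × Fin n}
    (h1 : ∀ q ∈ s, q.1 ≠ q0.1) :
    ∀ q ∈ insert q0 s, ∀ q' ∈ insert q0 s, q.1 = q'.1 → q = q' := by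
  intro q hq q' hq' he
  rcases Finset.mem_insert.mp hq with h | h <;>
    rcases Finset.mem_insert.mp hq' with h' | h'
  · rw [h, h']
  · exact absurd (show q'.1 = q0.1 by rw [← h]; exact he.symm) (h1 q' h')
  · exact absurd (show q.1 = q0.1 by rw [← h']; exact he) (h1 q h)
  · exact hfn q h q' h' he

lemma pairwise_snd_insert {s : Finset (Fin n × Fin n)}
    (hfn : ∀ q ∈ s, ∀ q' ∈ s, q.2 = q'.2 → q = q') {q0 : Fin n × Fin n}
    (h1 : ∀ q ∈ s, q.2 ≠ q0.2) :
    ∀ q ∈ insert q0 s, ∀ q' ∈ insert q0 s, q.2 = q'.2 → q = q' := by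
  intro q hq q' hq' he
  rcases Finset.mem_insert.mp hq with h | h <;>
    rcases Finset.mem_insert.mp hq' with h' | h'
  · rw [h, h']
  · exact absurd (show q'.2 = q0.2 by rw [← h]; exact he.symm) (h1 q' h')
  · exact absurd (show q.2 = q0.2 by rw [← h']; exact he) (h1 q h)
  · exact hfn q h q' h' he

lemma valid_restrict {p : Fin n → Step} {k : ℕ} {s : Finset (Fin n × Fin n)}
    (hs : ValidS p (k+1) s) {x : Fin n} (hx : (x : ℕ) = k) :
    ValidS p k (rst x s) := by
  obtain ⟨hb, hfn, hinj, hpat⟩ := hs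
  refine ⟨?_, ?_, ?_, ?_⟩
  · intro q hq
    rw [mem_rst] at hq
    have h1 := hb q hq.1
    have e1 : (q.1 : ℕ) ≠ k := fun h => hq.2.1 (Fin.ext (h.trans hx.symm))
    have e2 : (q.2 : ℕ) ≠ k := fun h => hq.2.2 (Fin.ext (h.trans hx.symm))
    omega
  · intro q hq q' hq' he
    exact hfn q (mem_rst.mp hq).1 q' (mem_rst.mp hq').1 he
  · intro q hq q' hq' he
    exact hinj q (mem_rst.mp hq).1 q' (mem_rst.mp hq').1 he
  · intro i hi
    have hix : i < x := by rw [Fin.lt_def, hx]; exact hi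
    rw [pat_untouched hix (fun q => ?_), hpat i (by omega)]
    by_cases hq : q.1 ≠ x ∧ q.2 ≠ x
    · left
      simp [mem_rst, hq]
    · right
      rcases not_and_or.mp hq with h | h <;> [left; right] <;> exact not_not.mp h

section Ext

variable {p : Fin n → Step} {k : ℕ} {s₀ : Finset (Fin n × Fin n)} {x : Fin n}

lemma pat_rest_of_lt (hx : (x : ℕ) = k) {i : Fin n} (hi : (i : ℕ) < k + 1)
    (hne : i ≠ x) : (i : ℕ) < k := by
  have : (i : ℕ) ≠ k := fun h => hne (Fin.ext (h.trans hx.symm))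
  omega

lemma lt_x_of_mem_AS (hx : (x : ℕ) = k) {j : Fin n} (hj : j ∈ AS s₀ k) : j < x := by
  rw [Fin.lt_def, hx]
  exact (mem_AS.mp hj).1

lemma lt_x_of_mem_BS (hx : (x : ℕ) = k) {v : Fin n} (hv : v ∈ BS s₀ k) : v < x := by
  rw [Fin.lt_def, hx]
  exact (mem_BS.mp hv).1

lemma valid_ext_U (hs : ValidS p k s₀) (hx : (x : ℕ) = k) (hkn : k < n)
    (hpx : p x = Step.U) : ValidS p (k+1) s₀ := by
  obtain ⟨hb, hfn, hinj, hpat⟩ := hs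
  refine ⟨fun q hq => ⟨(hb q hq).1.trans (by omega), (hb q hq).2.trans (by omega)⟩,
    hfn, hinj, fun i hi => ?_⟩
  by_cases hix : i = x
  · rw [hix, hpx, pat_eq_U_iff]
    constructor
    · intro q hq hq1
      exact absurd hq1 (coord_ne ⟨hb, hfn, hinj, hpat⟩ hx q hq).1
    · intro q hq hq1
      exact absurd hq1 (coord_ne ⟨hb, hfn, hinj, hpat⟩ hx q hq).2
  · exact hpat i (pat_rest_of_lt hx hi hix)

lemma valid_ext_Hfix (hs : ValidS p k s₀) (hx : (x : ℕ) = k) (hkn : k < n)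
    (hpx : p x = Step.H) : ValidS p (k+1) (insert (x, x) s₀) := by
  obtain ⟨hb, hfn, hinj, hpat⟩ := hs
  have hcn := coord_ne ⟨hb, hfn, hinj, hpat⟩ hx
  refine ⟨?_, ?_, ?_, ?_⟩
  · intro q hq
    rcases Finset.mem_insert.mp hq with h | h
    · rw [h]
      simp [hx]
    · exact ⟨(hb q h).1.trans (by omega), (hb q h).2.trans (by omega)⟩
  · exact pairwise_fst_insert hfn (fun q hq => (hcn q hq).1)
  · exact pairwise_snd_insert hinj (fun q hq => (hcn q hq).2)
  · intro i hi
    by_cases hix : i = x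
    · subst hix
      rw [hpx, pat_eq_H_iff]
      constructor
      · intro hc
        exact absurd (hc.1 (i, i) (Finset.mem_insert_self _ _) rfl) (lt_irrefl i)
      · rintro ⟨⟨q, hq, hq1, hq2⟩, -⟩
        rcases Finset.mem_insert.mp hq with h | h
        · rw [h] at hq2
          exact absurd hq2 (lt_irrefl i)
        · exact (hcn q h).1 hq1
    · have hix2 : i < x := by
        rw [Fin.lt_def, hx]
        exact pat_rest_of_lt hx hi hix
      rw [pat_untouched hix2 (fun q => ?_)]
      · exact hpat i (pat_rest_of_lt hx hi hix)
      · by_cases hq : q = (x, x)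
        · exact Or.inr (Or.inl (by rw [hq]))
        · exact Or.inl (by simp [Finset.mem_insert, hq])

lemma valid_ext_Hout (hs : ValidS p k s₀) (hx : (x : ℕ) = k) (hkn : k < n)
    (hpx : p x = Step.H) {v : Fin n} (hv : v ∈ BS s₀ k) :
    ValidS p (k+1) (insert (x, v) s₀) := by
  obtain ⟨hb, hfn, hinj, hpat⟩ := hs
  have hcn := coord_ne ⟨hb, hfn, hinj, hpat⟩ hx
  have hvk := (mem_BS.mp hv).1
  have hvs := (mem_BS.mp hv).2
  have hvx : v < x := by rw [Fin.lt_def, hx]; exact hvk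
  refine ⟨?_, ?_, ?_, ?_⟩
  · intro q hq
    rcases Finset.mem_insert.mp hq with h | h
    · rw [h]
      exact ⟨by simp [hx], by simp; omega⟩
    · exact ⟨(hb q h).1.trans (by omega), (hb q h).2.trans (by omega)⟩
  · exact pairwise_fst_insert hfn (fun q hq => (hcn q hq).1)
  · exact pairwise_snd_insert hinj (fun q hq => hvs q hq)
  · intro i hi
    by_cases hix : i = x
    · subst hix
      rw [hpx, pat_eq_H_iff]
      constructor
      · intro hc
        exact absurd (hc.1 (i, v) (Finset.mem_insert_self _ _) rfl) (not_lt_of_gt hvx)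
      · rintro ⟨-, ⟨q, hq, hq1, hq2⟩⟩
        rcases Finset.mem_insert.mp hq with h | h
        · rw [h] at hq1
          exact absurd hq1 (ne_of_lt hvx)
        · exact (hcn q h).2 hq1
    · have hix2 : i < x := by
        rw [Fin.lt_def, hx]
        exact pat_rest_of_lt hx hi hix
      rw [pat_untouched hix2 (fun q => ?_)]
      · exact hpat i (pat_rest_of_lt hx hi hix)
      · by_cases hq : q = (x, v)
        · exact Or.inr (Or.inl (by rw [hq]))
        · exact Or.inl (by simp [Finset.mem_insert, hq])

lemma valid_ext_Hin (hs : ValidS p k s₀) (hx : (x : ℕ) = k) (hkn : k < n)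
    (hpx : p x = Step.H) {j : Fin n} (hj : j ∈ AS s₀ k) :
    ValidS p (k+1) (insert (j, x) s₀) := by
  obtain ⟨hb, hfn, hinj, hpat⟩ := hs
  have hcn := coord_ne ⟨hb, hfn, hinj, hpat⟩ hx
  have hjk := (mem_AS.mp hj).1
  have hjs := (mem_AS.mp hj).2
  have hjx : j < x := by rw [Fin.lt_def, hx]; exact hjk
  refine ⟨?_, ?_, ?_, ?_⟩
  · intro q hq
    rcases Finset.mem_insert.mp hq with h | h
    · rw [h]
      exact ⟨by simp; omega, by simp [hx]⟩
    · exact ⟨(hb q h).1.trans (by omega), (hb q h).2.trans (by omega)⟩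
  · exact pairwise_fst_insert hfn (fun q hq => hjs q hq)
  · exact pairwise_snd_insert hinj (fun q hq => (hcn q hq).2)
  · intro i hi
    by_cases hix : i = x
    · subst hix
      rw [hpx, pat_eq_H_iff]
      constructor
      · intro hc
        exact absurd (hc.2 (j, i) (Finset.mem_insert_self _ _) rfl) (not_lt_of_gt hjx)
      · rintro ⟨⟨q, hq, hq1, hq2⟩, -⟩
        rcases Finset.mem_insert.mp hq with h | h
        · rw [h] at hq1
          exact absurd hq1 (ne_of_lt hjx)
        · exact (hcn q h).1 hq1
    · have hix2 : i < x := by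
        rw [Fin.lt_def, hx]
        exact pat_rest_of_lt hx hi hix
      rw [pat_untouched hix2 (fun q => ?_)]
      · exact hpat i (pat_rest_of_lt hx hi hix)
      · by_cases hq : q = (j, x)
        · exact Or.inr (Or.inr (by rw [hq]))
        · exact Or.inl (by simp [Finset.mem_insert, hq])

lemma valid_ext_D (hs : ValidS p k s₀) (hx : (x : ℕ) = k) (hkn : k < n)
    (hpx : p x = Step.D) {j v : Fin n} (hj : j ∈ AS s₀ k) (hv : v ∈ BS s₀ k) :
    ValidS p (k+1) (insert (x, v) (insert (j, x) s₀)) := by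
  obtain ⟨hb, hfn, hinj, hpat⟩ := hs
  have hcn := coord_ne ⟨hb, hfn, hinj, hpat⟩ hx
  have hjk := (mem_AS.mp hj).1
  have hjs := (mem_AS.mp hj).2
  have hvk := (mem_BS.mp hv).1
  have hvs := (mem_BS.mp hv).2
  have hjx : j < x := by rw [Fin.lt_def, hx]; exact hjk
  have hvx : v < x := by rw [Fin.lt_def, hx]; exact hvk
  refine ⟨?_, ?_, ?_, ?_⟩
  · intro q hq
    rcases Finset.mem_insert.mp hq with h | h
    · rw [h]
      exact ⟨by simp [hx], by simp; omega⟩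
    · rcases Finset.mem_insert.mp h with h2 | h2
      · rw [h2]
        exact ⟨by simp; omega, by simp [hx]⟩
      · exact ⟨(hb q h2).1.trans (by omega), (hb q h2).2.trans (by omega)⟩
  · refine pairwise_fst_insert (pairwise_fst_insert hfn (fun q hq => hjs q hq)) ?_
    intro q hq
    rcases Finset.mem_insert.mp hq with h | h
    · rw [h]
      show j ≠ x
      intro he
      rw [Fin.ext_iff, hx] at he
      omega
    · exact (hcn q h).1
  · refine pairwise_snd_insert (pairwise_snd_insert hinj (fun q hq => (hcn q hq).2)) ?_
    intro q hq
    rcases Finset.mem_insert.mp hq with h | h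
    · rw [h]
      show x ≠ v
      intro he
      rw [Fin.ext_iff, hx] at he
      omega
    · exact hvs q h
  · intro i hi
    by_cases hix : i = x
    · subst hix
      rw [hpx, pat_eq_D_iff]
      refine ⟨fun hc => absurd (hc.1 (i, v) (Finset.mem_insert_self _ _) rfl)
        (not_lt_of_gt hvx), ⟨(i, v), Finset.mem_insert_self _ _, rfl, hvx⟩,
        ⟨(j, i), Finset.mem_insert_of_mem (Finset.mem_insert_self _ _), rfl, hjx⟩⟩
    · have hix2 : i < x := by
        rw [Fin.lt_def, hx]
        exact pat_rest_of_lt hx hi hix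
      rw [pat_untouched hix2 (fun q => ?_)]
      · exact hpat i (pat_rest_of_lt hx hi hix)
      · by_cases hq : q = (x, v)
        · exact Or.inr (Or.inl (by rw [hq]))
        · by_cases hq2 : q = (j, x)
          · exact Or.inr (Or.inr (by rw [hq2]))
          · exact Or.inl (by simp [Finset.mem_insert, hq, hq2])

lemma classify {s : Finset (Fin n × Fin n)} (hs : ValidS p (k+1) s) (hx : (x : ℕ) = k) :
    (p x = Step.U ∧ s = rst x s) ∨
    (p x = Step.H ∧ (s = insert (x, x) (rst x s)
      ∨ (∃ v ∈ BS (rst x s) k, s = insert (x, v) (rst x s))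
      ∨ (∃ j ∈ AS (rst x s) k, s = insert (j, x) (rst x s)))) ∨
    (p x = Step.D ∧ ∃ j ∈ AS (rst x s) k, ∃ v ∈ BS (rst x s) k,
      s = insert (x, v) (insert (j, x) (rst x s))) := by
  obtain ⟨hb, hfn, hinj, hpat⟩ := hs
  have hxlt : (x : ℕ) < k + 1 := by omega
  have hps : pat s x = p x := hpat x hxlt
  have hle : ∀ q ∈ s, ¬ (x < q.1) ∧ ¬ (x < q.2) := by
    intro q hq
    have := hb q hq
    rw [Fin.lt_def, Fin.lt_def, hx]
    omega
  have hmem0 : ∀ q, q ∈ rst x s → q ∈ s := fun q hq => (mem_rst.mp hq).1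
  cases hpx2 : p x with
  | U =>
    rw [hpx2, pat_eq_U_iff] at hps
    refine Or.inl ⟨rfl, ?_⟩
    rw [rst, Finset.filter_true_of_mem ?_]
    intro q hq
    constructor
    · intro h1
      exact absurd (hps.1 q hq h1) (hle q hq).2
    · intro h2
      exact absurd (hps.2 q hq h2) (hle q hq).1
  | D =>
    rw [hpx2, pat_eq_D_iff] at hps
    obtain ⟨-, ⟨qa, hqa, ha1, ha2⟩, ⟨qb, hqb, hb2, hb1⟩⟩ := hps
    refine Or.inr (Or.inr ⟨rfl, qb.1, ?_, qa.2, ?_, ?_⟩)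
    · rw [mem_AS]
      refine ⟨by rw [← hx]; exact hb1, ?_⟩
      intro q hq he
      obtain ⟨hqs, hq1, hq2⟩ := mem_rst.mp hq
      exact hq2 ((hfn q hqs qb hqb he) ▸ hb2)
    · rw [mem_BS]
      refine ⟨by rw [← hx]; exact ha2, ?_⟩
      intro q hq he
      obtain ⟨hqs, hq1, hq2⟩ := mem_rst.mp hq
      exact hq1 ((hinj q hqs qa hqa he) ▸ ha1)
    · have hqaeq : qa = (x, qa.2) := Prod.ext_iff.mpr ⟨ha1, rfl⟩
      have hqbeq : qb = (qb.1, x) := Prod.ext_iff.mpr ⟨rfl, hb2⟩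
      apply Finset.ext
      intro q
      constructor
      · intro hq
        by_cases h1 : q.1 = x
        · have : q = qa := hfn q hq qa hqa (h1.trans ha1.symm)
          rw [this, hqaeq]
          exact Finset.mem_insert_self _ _
        · by_cases h2 : q.2 = x
          · have : q = qb := hinj q hq qb hqb (h2.trans hb2.symm)
            rw [this, hqbeq]
            exact Finset.mem_insert_of_mem (Finset.mem_insert_self _ _)
          · exact Finset.mem_insert_of_mem (Finset.mem_insert_of_mem
              (mem_rst.mpr ⟨hq, h1, h2⟩))
      · intro hq
        rcases Finset.mem_insert.mp hq with h | h
        · rw [h, ← hqaeq]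
          exact hqa
        · rcases Finset.mem_insert.mp h with h' | h'
          · rw [h', ← hqbeq]
            exact hqb
          · exact hmem0 q h'
  | H =>
    rw [hpx2, pat_eq_H_iff] at hps
    obtain ⟨hnc1, hnc2⟩ := hps
    refine Or.inr (Or.inl ⟨rfl, ?_⟩)
    by_cases hout : ∃ q ∈ s, q.1 = x
    · obtain ⟨qa, hqa, ha1⟩ := hout
      by_cases hin : ∃ q ∈ s, q.2 = x
      · obtain ⟨qb, hqb, hb2⟩ := hin
        by_cases hab : qa = qb
        · -- fixed point
          left
          have hqaeq : qa = (x, x) := Prod.ext_iff.mpr ⟨ha1, hab ▸ hb2⟩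
          apply Finset.ext
          intro q
          constructor
          · intro hq
            by_cases h1 : q.1 = x
            · have : q = qa := hfn q hq qa hqa (h1.trans ha1.symm)
              rw [this, hqaeq]
              exact Finset.mem_insert_self _ _
            · by_cases h2 : q.2 = x
              · have : q = qb := hinj q hq qb hqb (h2.trans hb2.symm)
                rw [this, ← hab, hqaeq]
                exact Finset.mem_insert_self _ _
              · exact Finset.mem_insert_of_mem (mem_rst.mpr ⟨hq, h1, h2⟩)
          · intro hq
            rcases Finset.mem_insert.mp hq with h | h
            · rw [h, ← hqaeq]
              exact hqa
            · exact hmem0 q h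
        · -- would be a D pattern, contradiction
          exfalso
          apply hnc2
          have ha2 : qa.2 < x := by
            rcases lt_or_eq_of_le (not_lt.mp (hle qa hqa).2) with h | h
            · exact h
            · exact absurd (hinj qa hqa qb hqb (h.trans hb2.symm)) hab
          have hb1 : qb.1 < x := by
            rcases lt_or_eq_of_le (not_lt.mp (hle qb hqb).1) with h | h
            · exact h
            · exact absurd (hfn qa hqa qb hqb (ha1.trans h.symm)) hab
          exact ⟨⟨qa, hqa, ha1, ha2⟩, ⟨qb, hqb, hb2, hb1⟩⟩
      · -- out-left step
        right; left
        have ha2 : qa.2 < x := by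
          rcases lt_or_eq_of_le (not_lt.mp (hle qa hqa).2) with h | h
          · exact h
          · exact absurd ⟨qa, hqa, h⟩ hin
        refine ⟨qa.2, ?_, ?_⟩
        · rw [mem_BS]
          refine ⟨by rw [← hx]; exact ha2, ?_⟩
          intro q hq he
          obtain ⟨hqs, hq1, hq2⟩ := mem_rst.mp hq
          exact hq1 ((hinj q hqs qa hqa he) ▸ ha1)
        · have hqaeq : qa = (x, qa.2) := Prod.ext_iff.mpr ⟨ha1, rfl⟩
          apply Finset.ext
          intro q
          constructor
          · intro hq
            by_cases h1 : q.1 = x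
            · have : q = qa := hfn q hq qa hqa (h1.trans ha1.symm)
              rw [this, hqaeq]
              exact Finset.mem_insert_self _ _
            · have h2 : q.2 ≠ x := fun h => hin ⟨q, hq, h⟩
              exact Finset.mem_insert_of_mem (mem_rst.mpr ⟨hq, h1, h2⟩)
          · intro hq
            rcases Finset.mem_insert.mp hq with h | h
            · rw [h, ← hqaeq]
              exact hqa
            · exact hmem0 q h
    · by_cases hin : ∃ q ∈ s, q.2 = x
      · -- in-left step
        obtain ⟨qb, hqb, hb2⟩ := hin
        right; right
        have hb1 : qb.1 < x := by
          rcases lt_or_eq_of_le (not_lt.mp (hle qb hqb).1) with h | h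
          · exact h
          · exact absurd ⟨qb, hqb, h⟩ hout
        refine ⟨qb.1, ?_, ?_⟩
        · rw [mem_AS]
          refine ⟨by rw [← hx]; exact hb1, ?_⟩
          intro q hq he
          obtain ⟨hqs, hq1, hq2⟩ := mem_rst.mp hq
          exact hq2 ((hfn q hqs qb hqb he) ▸ hb2)
        · have hqbeq : qb = (qb.1, x) := Prod.ext_iff.mpr ⟨rfl, hb2⟩
          apply Finset.ext
          intro q
          constructor
          · intro hq
            by_cases h2 : q.2 = x
            · have : q = qb := hinj q hq qb hqb (h2.trans hb2.symm)
              rw [this, hqbeq]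
              exact Finset.mem_insert_self _ _
            · have h1 : q.1 ≠ x := fun h => hout ⟨q, hq, h⟩
              exact Finset.mem_insert_of_mem (mem_rst.mpr ⟨hq, h1, h2⟩)
          · intro hq
            rcases Finset.mem_insert.mp hq with h | h
            · rw [h, ← hqbeq]
              exact hqb
            · exact hmem0 q h
      · -- no pair at x at all: then pat would be U, contradiction
        exfalso
        exact hnc1 ⟨fun q hq h1 => absurd ⟨q, hq, h1⟩ hout,
          fun q hq h2 => absurd ⟨q, hq, h2⟩ hin⟩

end Ext

lemma card_filter_val_lt {k : ℕ} (hkn : k ≤ n) :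
    ((Finset.univ : Finset (Fin n)).filter (fun j : Fin n => (j:ℕ) < k)).card = k := by
  rw [Finset.card_filter]
  rw [Fin.sum_univ_eq_sum_range (fun i => if i < k then (1:ℕ) else 0)]
  have e1 : ∀ i ∈ Finset.range n, (if i < k then (1:ℕ) else 0)
      = if i ∈ Finset.range k then 1 else 0 := by
    intro i _
    simp [Finset.mem_range]
  rw [Finset.sum_congr rfl e1, Finset.sum_ite_mem,
    Finset.inter_eq_right.mpr (Finset.range_subset_range.mpr hkn), Finset.sum_const,
    smul_eq_mul, mul_one, Finset.card_range]

lemma card_AS_BS {p : Fin n → Step} {k : ℕ} {s : Finset (Fin n × Fin n)}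
    (hs : ValidS p k s) (hkn : k ≤ n) :
    (AS s k).card = k - s.card ∧ (BS s k).card = k - s.card ∧ s.card ≤ k := by
  obtain ⟨hb, hfn, hinj, -⟩ := hs
  have hdomA : s.image Prod.fst ⊆ Finset.univ.filter (fun j : Fin n => (j:ℕ) < k) := by
    intro j hj
    obtain ⟨q, hq, rfl⟩ := Finset.mem_image.mp hj
    simp [Finset.mem_filter, (hb q hq).1]
  have hdomB : s.image Prod.snd ⊆ Finset.univ.filter (fun j : Fin n => (j:ℕ) < k) := by
    intro j hj
    obtain ⟨q, hq, rfl⟩ := Finset.mem_image.mp hj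
    simp [Finset.mem_filter, (hb q hq).2]
  have hcardA : (s.image Prod.fst).card = s.card :=
    Finset.card_image_of_injOn (fun q hq q' hq' he => hfn q hq q' hq' he)
  have hcardB : (s.image Prod.snd).card = s.card :=
    Finset.card_image_of_injOn (fun q hq q' hq' he => hinj q hq q' hq' he)
  have hAS : AS s k = (Finset.univ.filter (fun j : Fin n => (j:ℕ) < k)) \ s.image Prod.fst := by
    apply Finset.ext
    intro j
    rw [mem_AS, Finset.mem_sdiff, Finset.mem_filter]
    simp only [Finset.mem_univ, true_and, Finset.mem_image]
    constructor
    · rintro ⟨h1, h2⟩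
      exact ⟨h1, fun ⟨q, hq, he⟩ => h2 q hq he⟩
    · rintro ⟨h1, h2⟩
      exact ⟨h1, fun q hq he => h2 ⟨q, hq, he⟩⟩
  have hBS : BS s k = (Finset.univ.filter (fun j : Fin n => (j:ℕ) < k)) \ s.image Prod.snd := by
    apply Finset.ext
    intro j
    rw [mem_BS, Finset.mem_sdiff, Finset.mem_filter]
    simp only [Finset.mem_univ, true_and, Finset.mem_image]
    constructor
    · rintro ⟨h1, h2⟩
      exact ⟨h1, fun ⟨q, hq, he⟩ => h2 q hq he⟩
    · rintro ⟨h1, h2⟩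
      exact ⟨h1, fun q hq he => h2 ⟨q, hq, he⟩⟩
  have hle : s.card ≤ k := by
    rw [← hcardA]
    calc (s.image Prod.fst).card ≤ _ := Finset.card_le_card hdomA
    _ = k := card_filter_val_lt hkn
  rw [hAS, hBS, Finset.card_sdiff_of_subset hdomA, Finset.card_sdiff_of_subset hdomB, hcardA, hcardB,
    card_filter_val_lt hkn]
  exact ⟨rfl, rfl, hle⟩

lemma valid_zero_empty {p : Fin n → Step} {s : Finset (Fin n × Fin n)}
    (hs : ValidS p 0 s) : s = ∅ :=
  Finset.eq_empty_of_forall_notMem (fun q hq => by have := hs.1 q hq; omega)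

lemma countIn_valid (p : Fin n → Step) :
    ∀ k, k ≤ n → ∀ s, ValidS p k s → countIn p Step.U k + s.card = countIn p Step.D k + k := by
  intro k
  induction k with
  | zero =>
    intro _ s hs
    rw [valid_zero_empty hs]
    simp [countIn_eq_sum]
  | succ k ih =>
    intro hk1 s hs
    have hkn : k < n := by omega
    set x : Fin n := ⟨k, hkn⟩ with hxdef
    have hx : (x : ℕ) = k := rfl
    have hs₀ : ValidS p k (rst x s) := valid_restrict hs hx
    have hih := ih (by omega) (rst x s) hs₀
    have hU := countIn_succ p Step.U k hkn
    have hD := countIn_succ p Step.D k hkn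
    have hnm : ∀ q : Fin n × Fin n, (q.1 = x ∨ q.2 = x) → q ∉ rst x s := by
      intro q hq hmem
      obtain ⟨-, h1, h2⟩ := mem_rst.mp hmem
      rcases hq with h | h
      · exact h1 h
      · exact h2 h
    rcases classify hs hx with ⟨hpx, hcard⟩ | ⟨hpx, hcase⟩ | ⟨hpx, j, hj, v, hv, hcard⟩
    · rw [← hcard] at hih
      rw [if_pos hpx] at hU
      rw [if_neg (fun h => absurd (hpx.symm.trans h) (by simp))] at hD
      omega
    · have hcc : s.card = (rst x s).card + 1 := by
        rcases hcase with h | ⟨v, hv, h⟩ | ⟨j, hj, h⟩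
        · have h2 := congrArg Finset.card h
          rw [Finset.card_insert_of_notMem (hnm _ (Or.inl rfl))] at h2
          exact h2
        · have h2 := congrArg Finset.card h
          rw [Finset.card_insert_of_notMem (hnm _ (Or.inl rfl))] at h2
          exact h2
        · have h2 := congrArg Finset.card h
          rw [Finset.card_insert_of_notMem (hnm _ (Or.inr rfl))] at h2
          exact h2
      rw [if_neg (fun h => absurd (hpx.symm.trans h) (by simp))] at hU
      rw [if_neg (fun h => absurd (hpx.symm.trans h) (by simp))] at hD
      omega
    · have hne : (x, v) ∉ insert (j, x) (rst x s) := by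
        intro hmem
        rcases Finset.mem_insert.mp hmem with h | h
        · have := congrArg Prod.fst h
          simp only at this
          rw [Fin.ext_iff, hx] at this
          have := (mem_AS.mp hj).1
          omega
        · exact hnm _ (Or.inl rfl) h
      have hne2 : (j, x) ∉ rst x s := hnm _ (Or.inr rfl)
      have hcc : s.card = (rst x s).card + 2 := by
        have h2 := congrArg Finset.card hcard
        rw [Finset.card_insert_of_notMem hne, Finset.card_insert_of_notMem hne2] at h2
        exact h2
      rw [if_neg (fun h => absurd (hpx.symm.trans h) (by simp))] at hU
      rw [if_pos hpx] at hD
      omega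

/-- The word's height before step `k`. -/
def ht (p : Fin n → Step) (k : ℕ) : ℕ := countIn p Step.U k - countIn p Step.D k

/-- The per-step weight used in the transfer recursion. -/
def aw (p : Fin n → Step) (i : Fin n) : ℕ :=
  if p i = Step.U then 1
  else if p i = Step.D then (ht p (i:ℕ))^2
  else 2 * ht p (i:ℕ) + 1

lemma rst_insert_fst (x v : Fin n) (t : Finset (Fin n × Fin n)) :
    rst x (insert (x, v) t) = rst x t := by
  rw [rst, Finset.filter_insert, if_neg (by simp), ← rst]

lemma rst_insert_snd (x j : Fin n) (t : Finset (Fin n × Fin n)) :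
    rst x (insert (j, x) t) = rst x t := by
  rw [rst, Finset.filter_insert, if_neg (by simp), ← rst]

lemma AS_card_eq_ht {p : Fin n → Step} {k : ℕ} {s₀ : Finset (Fin n × Fin n)}
    (hs₀ : ValidS p k s₀) (hkn : k ≤ n) :
    (AS s₀ k).card = ht p k ∧ (BS s₀ k).card = ht p k := by
  obtain ⟨hA, hB, hc⟩ := card_AS_BS hs₀ hkn
  have hinv := countIn_valid p k hkn s₀ hs₀
  unfold ht
  omega

lemma fiber_card {p : Fin n → Step} {k : ℕ} (hkn : k < n) {s₀ : Finset (Fin n × Fin n)}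
    (hs₀ : ValidS p k s₀) :
    ((V p (k+1)).filter (fun s => rst (⟨k, hkn⟩ : Fin n) s = s₀)).card
      = aw p ⟨k, hkn⟩ := by
  set x : Fin n := ⟨k, hkn⟩ with hxdef
  have hx : (x : ℕ) = k := rfl
  obtain ⟨hAcard, hBcard⟩ := AS_card_eq_ht hs₀ (le_of_lt hkn)
  have hcn := coord_ne hs₀ hx
  have hne_of_AS : ∀ {j : Fin n}, j ∈ AS s₀ k → j ≠ x := by
    intro j hj he
    have := (mem_AS.mp hj).1
    rw [he, hx] at this
    omega
  have hne_of_BS : ∀ {v : Fin n}, v ∈ BS s₀ k → v ≠ x := by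
    intro v hv he
    have := (mem_BS.mp hv).1
    rw [he, hx] at this
    omega
  cases hpx : p x with
  | U =>
    have hT : (V p (k+1)).filter (fun s => rst x s = s₀) = {s₀} := by
      apply Finset.ext
      intro s
      rw [Finset.mem_filter, Finset.mem_singleton, mem_V]
      constructor
      · rintro ⟨hv, hr⟩
        rcases classify hv hx with ⟨-, h⟩ | ⟨h, -⟩ | ⟨h, -⟩
        · rw [h, hr]
        · exact absurd (h.symm.trans hpx) (by simp)
        · exact absurd (h.symm.trans hpx) (by simp)
      · intro h
        rw [h]
        exact ⟨valid_ext_U hs₀ hx hkn hpx, rst_eq_self hs₀ hx⟩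
    rw [hT, Finset.card_singleton]
    unfold aw
    rw [if_pos hpx]
  | D =>
    have hT : (V p (k+1)).filter (fun s => rst x s = s₀)
        = ((AS s₀ k) ×ˢ (BS s₀ k)).image
            (fun jv => insert (x, jv.2) (insert (jv.1, x) s₀)) := by
      apply Finset.ext
      intro s
      rw [Finset.mem_filter, Finset.mem_image, mem_V]
      constructor
      · rintro ⟨hv, hr⟩
        rcases classify hv hx with ⟨h, -⟩ | ⟨h, -⟩ | ⟨-, j, hj, v, hvv, h⟩
        · exact absurd (h.symm.trans hpx) (by simp)
        · exact absurd (h.symm.trans hpx) (by simp)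
        · rw [hr] at hj hvv h
          exact ⟨(j, v), Finset.mem_product.mpr ⟨hj, hvv⟩, h.symm⟩
      · rintro ⟨⟨j, v⟩, hjv, rfl⟩
        obtain ⟨hj, hv⟩ := Finset.mem_product.mp hjv
        refine ⟨valid_ext_D hs₀ hx hkn hpx hj hv, ?_⟩
        rw [rst_insert_fst, rst_insert_snd, rst_eq_self hs₀ hx]
    rw [hT, Finset.card_image_of_injOn, Finset.card_product, hAcard, hBcard]
    · unfold aw
      rw [if_neg (fun h => absurd (hpx.symm.trans h) (by simp)), if_pos hpx]
      ring
    · rintro ⟨j, v⟩ hjv ⟨j', v'⟩ hjv' he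
      obtain ⟨hj, hv⟩ := Finset.mem_product.mp hjv
      obtain ⟨hj', hv'⟩ := Finset.mem_product.mp hjv'
      simp only at he
      have hv2 : (x, v) ∈ insert (x, v') (insert (j', x) s₀) := by
        rw [← he]
        exact Finset.mem_insert_self _ _
      have hveq : v = v' := by
        rcases Finset.mem_insert.mp hv2 with h | h
        · exact congrArg Prod.snd h
        · rcases Finset.mem_insert.mp h with h' | h'
          · exact absurd (congrArg Prod.fst h') (hne_of_AS hj').symm
          · exact absurd rfl ((hcn _ h').1)
      have hj2 : (j, x) ∈ insert (x, v') (insert (j', x) s₀) := by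
        rw [← he]
        exact Finset.mem_insert_of_mem (Finset.mem_insert_self _ _)
      have hjeq : j = j' := by
        rcases Finset.mem_insert.mp hj2 with h | h
        · exact absurd (congrArg Prod.fst h) (hne_of_AS hj)
        · rcases Finset.mem_insert.mp h with h' | h'
          · exact congrArg Prod.fst h'
          · exact absurd rfl ((hcn _ h').2)
      rw [hveq, hjeq]
  | H =>
    have hT : (V p (k+1)).filter (fun s => rst x s = s₀)
        = insert (insert (x, x) s₀)
            (((BS s₀ k).image (fun v => insert (x, v) s₀))
              ∪ ((AS s₀ k).image (fun j => insert (j, x) s₀))) := by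
      apply Finset.ext
      intro s
      rw [Finset.mem_filter, Finset.mem_insert, Finset.mem_union, mem_V]
      constructor
      · rintro ⟨hv, hr⟩
        rcases classify hv hx with ⟨h, -⟩ | ⟨-, hcase⟩ | ⟨h, -⟩
        · exact absurd (h.symm.trans hpx) (by simp)
        · rw [hr] at hcase
          rcases hcase with h | ⟨v, hvv, h⟩ | ⟨j, hj, h⟩
          · exact Or.inl h
          · exact Or.inr (Or.inl (Finset.mem_image.mpr ⟨v, hvv, h.symm⟩))
          · exact Or.inr (Or.inr (Finset.mem_image.mpr ⟨j, hj, h.symm⟩))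
        · exact absurd (h.symm.trans hpx) (by simp)
      · rintro (h | h | h)
        · rw [h]
          exact ⟨valid_ext_Hfix hs₀ hx hkn hpx,
            by rw [rst_insert_fst, rst_eq_self hs₀ hx]⟩
        · obtain ⟨v, hv, rfl⟩ := Finset.mem_image.mp h
          exact ⟨valid_ext_Hout hs₀ hx hkn hpx hv,
            by rw [rst_insert_fst, rst_eq_self hs₀ hx]⟩
        · obtain ⟨j, hj, rfl⟩ := Finset.mem_image.mp h
          exact ⟨valid_ext_Hin hs₀ hx hkn hpx hj,
            by rw [rst_insert_snd, rst_eq_self hs₀ hx]⟩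
    rw [hT]
    have hnotmem : insert (x, x) s₀ ∉
        ((BS s₀ k).image (fun v => insert (x, v) s₀))
          ∪ ((AS s₀ k).image (fun j => insert (j, x) s₀)) := by
      intro hmem
      rcases Finset.mem_union.mp hmem with h | h
      · obtain ⟨v, hv, he⟩ := Finset.mem_image.mp h
        have : (x, x) ∈ insert (x, v) s₀ := by
          rw [he]
          exact Finset.mem_insert_self _ _
        rcases Finset.mem_insert.mp this with h' | h'
        · exact (hne_of_BS hv) (congrArg Prod.snd h').symm
        · exact (hcn _ h').1 rfl
      · obtain ⟨j, hj, he⟩ := Finset.mem_image.mp h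
        have : (x, x) ∈ insert (j, x) s₀ := by
          rw [he]
          exact Finset.mem_insert_self _ _
        rcases Finset.mem_insert.mp this with h' | h'
        · exact (hne_of_AS hj) (congrArg Prod.fst h').symm
        · exact (hcn _ h').1 rfl
    have hdisj : Disjoint ((BS s₀ k).image (fun v => insert (x, v) s₀))
        ((AS s₀ k).image (fun j => insert (j, x) s₀)) := by
      rw [Finset.disjoint_left]
      intro t h1 h2
      obtain ⟨v, hv, he1⟩ := Finset.mem_image.mp h1
      obtain ⟨j, hj, he2⟩ := Finset.mem_image.mp h2
      have : (x, v) ∈ insert (j, x) s₀ := by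
        rw [he2, ← he1]
        exact Finset.mem_insert_self _ _
      rcases Finset.mem_insert.mp this with h' | h'
      · exact (hne_of_AS hj) (congrArg Prod.fst h').symm
      · exact (hcn _ h').1 rfl
    have hinj1 : Set.InjOn (fun v => insert (x, v) s₀) (BS s₀ k) := by
      intro v hv v' hv' he
      simp only at he
      have : (x, v) ∈ insert (x, v') s₀ := by
        rw [← he]
        exact Finset.mem_insert_self _ _
      rcases Finset.mem_insert.mp this with h' | h'
      · exact congrArg Prod.snd h'
      · exact absurd rfl ((hcn _ h').1)
    have hinj2 : Set.InjOn (fun j => insert (j, x) s₀) (AS s₀ k) := by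
      intro j hj j' hj' he
      simp only at he
      have : (j, x) ∈ insert (j', x) s₀ := by
        rw [← he]
        exact Finset.mem_insert_self _ _
      rcases Finset.mem_insert.mp this with h' | h'
      · exact congrArg Prod.fst h'
      · exact absurd rfl ((hcn _ h').2)
    rw [Finset.card_insert_of_notMem hnotmem, Finset.card_union_of_disjoint hdisj,
      Finset.card_image_of_injOn hinj1, Finset.card_image_of_injOn hinj2,
      hAcard, hBcard]
    unfold aw
    rw [if_neg (fun h => absurd (hpx.symm.trans h) (by simp)),
      if_neg (fun h => absurd (hpx.symm.trans h) (by simp))]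
    ring

lemma cardV (p : Fin n → Step) :
    ∀ k, k ≤ n → (V p k).card
      = ∏ i ∈ Finset.univ.filter (fun i : Fin n => (i:ℕ) < k), aw p i := by
  intro k
  induction k with
  | zero =>
    intro _
    have hV : V p 0 = {∅} := by
      apply Finset.ext
      intro s
      rw [mem_V, Finset.mem_singleton]
      constructor
      · exact valid_zero_empty
      · intro h
        subst h
        exact ⟨fun q hq => absurd hq (Finset.notMem_empty q),
          fun q hq => absurd hq (Finset.notMem_empty q),
          fun q hq => absurd hq (Finset.notMem_empty q),
          fun i hi => absurd hi (by omega)⟩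
    rw [hV, Finset.card_singleton]
    rw [Finset.filter_false_of_mem (fun i _ => by omega), Finset.prod_empty]
  | succ k ih =>
    intro hk1
    have hkn : k < n := by omega
    set x : Fin n := ⟨k, hkn⟩ with hxdef
    have hx : (x : ℕ) = k := rfl
    have hstep : (V p (k+1)).card = (V p k).card * aw p x := by
      rw [Finset.card_eq_sum_card_fiberwise
        (f := rst x) (t := V p k)
        (fun s hs => mem_V.mpr (valid_restrict (mem_V.mp hs) rfl))]
      rw [Finset.sum_congr rfl (fun s₀ hs₀ => fiber_card hkn (mem_V.mp hs₀)),
        Finset.sum_const, smul_eq_mul]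
    have hfilter : Finset.univ.filter (fun i : Fin n => (i:ℕ) < k + 1)
        = insert x (Finset.univ.filter (fun i : Fin n => (i:ℕ) < k)) := by
      apply Finset.ext
      intro i
      rw [Finset.mem_insert, Finset.mem_filter, Finset.mem_filter]
      simp only [Finset.mem_univ, true_and]
      constructor
      · intro h
        by_cases he : i = x
        · exact Or.inl he
        · refine Or.inr ?_
          have : (i : ℕ) ≠ k := fun hh => he (Fin.ext hh)
          omega
      · rintro (h | h)
        · rw [h, hx]
          omega
        · omega
    rw [hstep, hfilter, Finset.prod_insert (by simp [hx]), ih (by omega)]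
    ring

/-- The graph of a permutation as a set of pairs. -/
def graphOf (w : Equiv.Perm (Fin n)) : Finset (Fin n × Fin n) :=
  Finset.univ.image (fun i => (i, w i))

lemma mem_graphOf {w : Equiv.Perm (Fin n)} {q : Fin n × Fin n} :
    q ∈ graphOf w ↔ q.2 = w q.1 := by
  unfold graphOf
  rw [Finset.mem_image]
  constructor
  · rintro ⟨i, -, rfl⟩
    rfl
  · intro h
    exact ⟨q.1, Finset.mem_univ _, by rw [Prod.ext_iff]; exact ⟨rfl, h.symm⟩⟩

lemma pat_graphOf (w : Equiv.Perm (Fin n)) (i : Fin n) :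
    pat (graphOf w) i = phi w i := by
  have c1 : ((∀ q ∈ graphOf w, q.1 = i → i < q.2) ∧ (∀ q ∈ graphOf w, q.2 = i → i < q.1))
      ↔ (i < w.symm i ∧ i < w i) := by
    constructor
    · intro ⟨h1, h2⟩
      constructor
      · exact h2 (w.symm i, i) (mem_graphOf.mpr (by simp)) rfl
      · exact h1 (i, w i) (mem_graphOf.mpr rfl) rfl
    · intro ⟨h1, h2⟩
      constructor
      · intro q hq hq1
        rw [mem_graphOf.mp hq, hq1]
        exact h2
      · intro q hq hq2
        have : q.1 = w.symm i := by
          rw [← hq2, mem_graphOf.mp hq]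
          simp
        rw [this]
        exact h1
  have c2 : ((∃ q ∈ graphOf w, q.1 = i ∧ q.2 < i) ∧ (∃ q ∈ graphOf w, q.2 = i ∧ q.1 < i))
      ↔ (w.symm i < i ∧ w i < i) := by
    constructor
    · rintro ⟨⟨q, hq, hq1, hq2⟩, ⟨q', hq', hq1', hq2'⟩⟩
      constructor
      · have : q'.1 = w.symm i := by
          rw [← hq1', mem_graphOf.mp hq']
          simp
        rw [← this]
        exact hq2'
      · have h3 : w i = q.2 := by rw [mem_graphOf.mp hq, hq1]
        rw [h3]
        exact hq2
    · intro ⟨h1, h2⟩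
      exact ⟨⟨(i, w i), mem_graphOf.mpr rfl, rfl, h2⟩,
        ⟨(w.symm i, i), mem_graphOf.mpr (by simp), rfl, h1⟩⟩
  unfold pat phi
  rw [if_congr c1 rfl rfl, if_congr c2 rfl rfl]

lemma graphOf_valid {w : Equiv.Perm (Fin n)} {p : Fin n → Step} (hw : phi w = p) :
    ValidS p n (graphOf w) := by
  refine ⟨fun q hq => ⟨q.1.isLt, q.2.isLt⟩, ?_, ?_, ?_⟩
  · intro q hq q' hq' he
    rw [Prod.ext_iff]
    exact ⟨he, by rw [mem_graphOf.mp hq, mem_graphOf.mp hq', he]⟩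
  · intro q hq q' hq' he
    have := (mem_graphOf.mp hq).symm.trans (he ▸ (mem_graphOf.mp hq'))
    have h1 : q.1 = q'.1 := w.injective this
    rw [Prod.ext_iff]
    exact ⟨h1, he⟩
  · intro i _
    rw [pat_graphOf, hw]

lemma card_fiber_phi {p : Fin n → Step} (hM : IsMotzkin p) :
    (Finset.univ.filter (fun w : Equiv.Perm (Fin n) => phi w = p)).card = (V p n).card := by
  apply Finset.card_bij (fun w _ => graphOf w)
  · intro w hw
    rw [mem_V]
    exact graphOf_valid (Finset.mem_filter.mp hw).2
  · intro w hw w' hw' he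
    apply Equiv.ext
    intro i
    have : (i, w i) ∈ graphOf w' := by
      rw [← he]
      exact mem_graphOf.mpr rfl
    exact mem_graphOf.mp this
  · intro s hs
    have hv := mem_V.mp hs
    -- totality
    have hAcard : (AS s n).card = ht p n := (AS_card_eq_ht hv le_rfl).1
    have hht0 : ht p n = 0 := by
      unfold ht
      have h2 := hM.2
      omega
    have hASempty : AS s n = ∅ := Finset.card_eq_zero.mp (by rw [hAcard, hht0])
    have htot : ∀ j : Fin n, ∃ q, q ∈ s ∧ q.1 = j := by
      intro j
      by_contra hcon
      push_neg at hcon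
      have hj : j ∈ AS s n := mem_AS.mpr ⟨j.isLt, fun q hq => hcon q hq⟩
      rw [hASempty] at hj
      exact Finset.notMem_empty j hj
    set f : Fin n → Fin n := fun j => (htot j).choose.2 with hf
    have hmem : ∀ j, (j, f j) ∈ s := by
      intro j
      have hsp := (htot j).choose_spec
      have he : (htot j).choose = (j, f j) := Prod.ext_iff.mpr ⟨hsp.2, rfl⟩
      rw [← he]
      exact hsp.1
    have hinj : Function.Injective f := by
      intro a b hab
      have := hv.2.2.1 (a, f a) (hmem a) (b, f b) (hmem b) hab
      exact congrArg Prod.fst this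
    have hbij := Finite.injective_iff_bijective.mp hinj
    set w : Equiv.Perm (Fin n) := Equiv.ofBijective f hbij with hw
    have hgr : graphOf w = s := by
      apply Finset.ext
      intro q
      rw [mem_graphOf]
      constructor
      · intro h
        have he : q = (q.1, f q.1) := Prod.ext_iff.mpr ⟨rfl, h⟩
        rw [he]
        exact hmem q.1
      · intro hq
        have h2 := hv.2.1 q hq (q.1, f q.1) (hmem q.1) rfl
        show q.2 = f q.1
        exact (Prod.ext_iff.mp h2).2
    refine ⟨w, ?_, hgr⟩
    rw [Finset.mem_filter]
    refine ⟨Finset.mem_univ _, ?_⟩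
    funext i
    rw [← pat_graphOf, hgr]
    exact hv.2.2.2 i i.isLt

lemma countIn_le (p : Fin n → Step) (st : Step) (m : ℕ) : countIn p st m ≤ n := by
  unfold countIn
  calc _ ≤ (Finset.univ : Finset (Fin n)).card := Finset.card_filter_le _ _
  _ = n := Finset.card_fin n

lemma countIn_zero (p : Fin n → Step) (st : Step) : countIn p st 0 = 0 := by
  simp [countIn_eq_sum]

lemma motz_U {p : Fin n → Step} (hM : IsMotzkin p) {i : Fin n} (h : p i = Step.U) :
    heightAt p i = ht p (i:ℕ) + 1 ∧ ht p ((i:ℕ)+1) = ht p (i:ℕ) + 1 := by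
  have h1 := countIn_succ p Step.U (i:ℕ) i.isLt
  have h2 := countIn_succ p Step.D (i:ℕ) i.isLt
  rw [Fin.eta, if_pos h] at h1
  rw [Fin.eta, if_neg (fun hc => absurd (h.symm.trans hc) (by simp))] at h2
  have h3 := hM.1 ((i:ℕ)+1) i.isLt
  have h4 := hM.1 (i:ℕ) (le_of_lt i.isLt)
  have h5 := heightAt_eq p i
  rw [if_neg (fun hc => absurd (h.symm.trans hc) (by simp))] at h5
  unfold ht
  omega

lemma motz_D {p : Fin n → Step} (hM : IsMotzkin p) {i : Fin n} (h : p i = Step.D) :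
    heightAt p i = ht p (i:ℕ) ∧ ht p ((i:ℕ)+1) + 1 = ht p (i:ℕ) ∧ 1 ≤ ht p (i:ℕ) := by
  have h1 := countIn_succ p Step.U (i:ℕ) i.isLt
  have h2 := countIn_succ p Step.D (i:ℕ) i.isLt
  rw [Fin.eta, if_neg (fun hc => absurd (h.symm.trans hc) (by simp))] at h1
  rw [Fin.eta, if_pos h] at h2
  have h3 := hM.1 ((i:ℕ)+1) i.isLt
  have h4 := hM.1 (i:ℕ) (le_of_lt i.isLt)
  have h5 := heightAt_eq p i
  rw [if_pos h] at h5
  unfold ht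
  omega

lemma motz_H {p : Fin n → Step} (hM : IsMotzkin p) {i : Fin n} (h : p i = Step.H) :
    heightAt p i = ht p (i:ℕ) ∧ ht p ((i:ℕ)+1) = ht p (i:ℕ) := by
  have h1 := countIn_succ p Step.U (i:ℕ) i.isLt
  have h2 := countIn_succ p Step.D (i:ℕ) i.isLt
  rw [Fin.eta, if_neg (fun hc => absurd (h.symm.trans hc) (by simp))] at h1
  rw [Fin.eta, if_neg (fun hc => absurd (h.symm.trans hc) (by simp))] at h2
  have h4 := hM.1 (i:ℕ) (le_of_lt i.isLt)
  have h5 := heightAt_eq p i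
  rw [if_neg (fun hc => absurd (h.symm.trans hc) (by simp))] at h5
  unfold ht
  omega

/-- generic prefix counter -/
def cnt (P : Fin n → Prop) [DecidablePred P] (m : ℕ) : ℕ :=
  ∑ i : Fin n, if (i:ℕ) < m ∧ P i then 1 else 0

lemma cnt_succ (P : Fin n → Prop) [DecidablePred P] (k : ℕ) (hk : k < n) :
    cnt P (k+1) = cnt P k + (if P ⟨k, hk⟩ then 1 else 0) := by
  unfold cnt
  have key : ∀ i : Fin n, (if (i : ℕ) < k + 1 ∧ P i then 1 else 0) =
      (if (i : ℕ) < k ∧ P i then 1 else 0)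
        + (if i = ⟨k, hk⟩ ∧ P i then (1:ℕ) else 0) := by
    intro i
    by_cases hp : P i
    · simp only [hp, and_true, Fin.ext_iff]
      split_ifs <;> omega
    · simp [hp]
  rw [Finset.sum_congr rfl (fun i _ => key i), Finset.sum_add_distrib]
  congr 1
  have key2 : ∀ i : Fin n, (if i = ⟨k, hk⟩ ∧ P i then (1:ℕ) else 0)
      = if i = ⟨k, hk⟩ then (if P i then 1 else 0) else 0 := by
    intro i
    by_cases hi : i = ⟨k, hk⟩ <;> simp [hi]
  rw [Finset.sum_congr rfl (fun i _ => key2 i), Finset.sum_ite_eq']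
  rw [if_pos (Finset.mem_univ _)]

lemma cnt_zero (P : Fin n → Prop) [DecidablePred P] : cnt P 0 = 0 := by
  simp [cnt]

lemma cnt_full (P : Fin n → Prop) [DecidablePred P] :
    cnt P n = (Finset.univ.filter P).card := by
  rw [Finset.card_filter]
  unfold cnt
  exact Finset.sum_congr rfl fun i _ => by simp [i.isLt]

lemma ht_zero (p : Fin n → Step) : ht p 0 = 0 := by
  unfold ht
  rw [countIn_zero, countIn_zero]

lemma crossing {p : Fin n → Step} (hM : IsMotzkin p) (h : ℕ) (hh : 1 ≤ h) :
    ∀ k, k ≤ n → cnt (fun i => p i = Step.U ∧ heightAt p i = h) k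
      = cnt (fun i => p i = Step.D ∧ heightAt p i = h) k
        + (if h ≤ ht p k then 1 else 0) := by
  intro k
  induction k with
  | zero =>
    intro _
    rw [cnt_zero, cnt_zero, ht_zero, if_neg (by omega)]
  | succ k ih =>
    intro hk1
    have hkn : k < n := by omega
    have ihk := ih (by omega)
    set x : Fin n := ⟨k, hkn⟩ with hxdef
    have hxv : (x : ℕ) = k := rfl
    have e1 := cnt_succ (fun i => p i = Step.U ∧ heightAt p i = h) k hkn
    have e2 := cnt_succ (fun i => p i = Step.D ∧ heightAt p i = h) k hkn
    rw [e1, e2, ihk]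
    cases hpx : p x with
    | U =>
      obtain ⟨hH, hht⟩ := motz_U hM hpx
      rw [hxv] at hH hht
      simp only [← hxdef, reduceCtorEq, false_and, if_false, eq_self_iff_true, true_and]
      rw [hH, hht]
      split_ifs <;> omega
    | D =>
      obtain ⟨hH, hht, hpos⟩ := motz_D hM hpx
      rw [hxv] at hH hht hpos
      simp only [← hxdef, reduceCtorEq, false_and, if_false, eq_self_iff_true, true_and]
      rw [hH]
      split_ifs <;> omega
    | H =>
      obtain ⟨hH, hht⟩ := motz_H hM hpx
      rw [hxv] at hH hht
      simp only [← hxdef, reduceCtorEq, false_and, if_false, eq_self_iff_true, true_and]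
      rw [hht]
      omega

lemma heightAt_le (p : Fin n → Step) (i : Fin n) : heightAt p i ≤ n + 1 := by
  have h1 := heightAt_eq p i
  have h2 := countIn_le p Step.U ((i:ℕ)+1)
  split_ifs at h1 <;> omega

lemma card_fiber_eq {p : Fin n → Step} (hM : IsMotzkin p) (h : ℕ) :
    (Finset.univ.filter (fun i : Fin n => p i = Step.U ∧ heightAt p i = h)).card
      = (Finset.univ.filter (fun i : Fin n => p i = Step.D ∧ heightAt p i = h)).card := by
  by_cases hh : 1 ≤ h
  · have hc := crossing hM h hh n le_rfl
    have hz : ht p n = 0 := by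
      unfold ht
      have := hM.2
      omega
    rw [hz, if_neg (by omega), add_zero] at hc
    rw [← cnt_full, ← cnt_full]
    exact hc
  · have h0 : h = 0 := by omega
    subst h0
    rw [Finset.filter_false_of_mem, Finset.filter_false_of_mem]
    · rintro i - ⟨hD, hH0⟩
      obtain ⟨he, -, hpos⟩ := motz_D hM hD
      omega
    · rintro i - ⟨hU, hH0⟩
      obtain ⟨he, -⟩ := motz_U hM hU
      omega

lemma prod_UD {p : Fin n → Step} (hM : IsMotzkin p) :
    (∏ i ∈ Finset.univ.filter (fun i : Fin n => p i = Step.U), heightAt p i)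
      = ∏ i ∈ Finset.univ.filter (fun i : Fin n => p i = Step.D), heightAt p i := by
  have hmapU : ∀ i ∈ Finset.univ.filter (fun i : Fin n => p i = Step.U),
      heightAt p i ∈ Finset.range (n+2) := by
    intro i _
    rw [Finset.mem_range]
    have := heightAt_le p i
    omega
  have hmapD : ∀ i ∈ Finset.univ.filter (fun i : Fin n => p i = Step.D),
      heightAt p i ∈ Finset.range (n+2) := by
    intro i _
    rw [Finset.mem_range]
    have := heightAt_le p i
    omega
  rw [← Finset.prod_fiberwise_of_maps_to hmapU (fun i => heightAt p i),
    ← Finset.prod_fiberwise_of_maps_to hmapD (fun i => heightAt p i)]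
  apply Finset.prod_congr rfl
  intro h _
  rw [Finset.filter_filter, Finset.filter_filter]
  have l1 : ∏ i ∈ Finset.univ.filter (fun i : Fin n => p i = Step.U ∧ heightAt p i = h),
      heightAt p i = h ^ (Finset.univ.filter
        (fun i : Fin n => p i = Step.U ∧ heightAt p i = h)).card := by
    rw [Finset.prod_congr rfl (fun i hi => (Finset.mem_filter.mp hi).2.2),
      Finset.prod_const]
  have l2 : ∏ i ∈ Finset.univ.filter (fun i : Fin n => p i = Step.D ∧ heightAt p i = h),
      heightAt p i = h ^ (Finset.univ.filter
        (fun i : Fin n => p i = Step.D ∧ heightAt p i = h)).card := by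
    rw [Finset.prod_congr rfl (fun i hi => (Finset.mem_filter.mp hi).2.2),
      Finset.prod_const]
  rw [l1, l2, card_fiber_eq hM h]

lemma prod_aw_eq_wt {p : Fin n → Step} (hM : IsMotzkin p) :
    (∏ i : Fin n, aw p i) = wt p := by
  unfold wt
  rw [← Finset.prod_filter_mul_prod_filter_not Finset.univ (fun i => p i = Step.H)
      (fun i => aw p i),
    ← Finset.prod_filter_mul_prod_filter_not Finset.univ (fun i => p i = Step.H)
      (fun i => if p i = Step.H then 2 * heightAt p i + 1 else heightAt p i)]
  congr 1
  · apply Finset.prod_congr rfl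
    intro i hi
    have hiH := (Finset.mem_filter.mp hi).2
    obtain ⟨hH, -⟩ := motz_H hM hiH
    unfold aw
    rw [if_neg (fun hc => absurd (hiH.symm.trans hc) (by simp)),
      if_neg (fun hc => absurd (hiH.symm.trans hc) (by simp)), if_pos hiH, hH]
  · rw [← Finset.prod_filter_mul_prod_filter_not
        (Finset.univ.filter (fun i : Fin n => ¬ p i = Step.H)) (fun i => p i = Step.U)
        (fun i => aw p i),
      ← Finset.prod_filter_mul_prod_filter_not
        (Finset.univ.filter (fun i : Fin n => ¬ p i = Step.H)) (fun i => p i = Step.U)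
        (fun i => if p i = Step.H then 2 * heightAt p i + 1 else heightAt p i)]
    rw [Finset.filter_filter, Finset.filter_filter]
    have eU : Finset.univ.filter (fun i : Fin n => ¬ p i = Step.H ∧ p i = Step.U)
        = Finset.univ.filter (fun i : Fin n => p i = Step.U) := by
      apply Finset.filter_congr
      intro i _
      cases hp : p i <;> simp [hp]
    have eD : Finset.univ.filter (fun i : Fin n => ¬ p i = Step.H ∧ ¬ p i = Step.U)
        = Finset.univ.filter (fun i : Fin n => p i = Step.D) := by
      apply Finset.filter_congr
      intro i _
      cases hp : p i <;> simp [hp]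
    rw [eU, eD]
    have pU1 : ∏ i ∈ Finset.univ.filter (fun i : Fin n => p i = Step.U), aw p i = 1 :=
      Finset.prod_eq_one (fun i hi => by
        unfold aw
        rw [if_pos (Finset.mem_filter.mp hi).2])
    have pUwt : ∏ i ∈ Finset.univ.filter (fun i : Fin n => p i = Step.U),
        (if p i = Step.H then 2 * heightAt p i + 1 else heightAt p i)
        = ∏ i ∈ Finset.univ.filter (fun i : Fin n => p i = Step.U), heightAt p i := by
      apply Finset.prod_congr rfl
      intro i hi
      have hiU := (Finset.mem_filter.mp hi).2
      rw [if_neg (fun hc => absurd (hiU.symm.trans hc) (by simp))]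
    have pDwt : ∏ i ∈ Finset.univ.filter (fun i : Fin n => p i = Step.D),
        (if p i = Step.H then 2 * heightAt p i + 1 else heightAt p i)
        = ∏ i ∈ Finset.univ.filter (fun i : Fin n => p i = Step.D), heightAt p i := by
      apply Finset.prod_congr rfl
      intro i hi
      have hiD := (Finset.mem_filter.mp hi).2
      rw [if_neg (fun hc => absurd (hiD.symm.trans hc) (by simp))]
    have pDaw : ∏ i ∈ Finset.univ.filter (fun i : Fin n => p i = Step.D), aw p i
        = ∏ i ∈ Finset.univ.filter (fun i : Fin n => p i = Step.D),
            (heightAt p i * heightAt p i) := by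
      apply Finset.prod_congr rfl
      intro i hi
      have hiD := (Finset.mem_filter.mp hi).2
      obtain ⟨hH, -, -⟩ := motz_D hM hiD
      unfold aw
      rw [if_neg (fun hc => absurd (hiD.symm.trans hc) (by simp)), if_pos hiD, hH]
      ring
    rw [pU1, pUwt, pDwt, pDaw, Finset.prod_mul_distrib, prod_UD hM]
    ring

end MzAux

/-- For all `n, m ≥ 0`, the number of permutations `w` of `{1,…,n}` with
`dep(w) = m` equals the sum of `wt(p)` over all Motzkin paths `p` of
length `n` with `ar(p) = m`. -/
theorem card_depth_eq_sum_wt (n m : ℕ) :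
    (Finset.univ.filter (fun w : Equiv.Perm (Fin n) => dep w = m)).card =
      ∑ p ∈ Finset.univ.filter
          (fun p : Fin n → Step => IsMotzkin p ∧ area p = (m : ℚ)), wt p := by
  classical
  rw [Finset.card_eq_sum_card_fiberwise (f := phi)
    (t := Finset.univ.filter (fun p : Fin n → Step => IsMotzkin p ∧ area p = (m : ℚ)))
    (fun w hw => by
      rw [Finset.mem_coe, Finset.mem_filter]
      refine ⟨Finset.mem_univ _, MzAux.isMotzkin_phi w, ?_⟩
      rw [MzAux.area_phi w, (Finset.mem_filter.mp (Finset.mem_coe.mp hw)).2])]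
  apply Finset.sum_congr rfl
  intro p hp
  obtain ⟨hM, hA⟩ := (Finset.mem_filter.mp hp).2
  have e : (Finset.univ.filter (fun w : Equiv.Perm (Fin n) => dep w = m)).filter
      (fun w => phi w = p) = Finset.univ.filter (fun w : Equiv.Perm (Fin n) => phi w = p) := by
    apply Finset.ext
    intro w
    simp only [Finset.mem_filter, Finset.mem_univ, true_and]
    constructor
    · exact And.right
    · intro h
      refine ⟨?_, h⟩
      have h1 : area (phi w) = (dep w : ℚ) := MzAux.area_phi w
      rw [h, hA] at h1
      exact_mod_cast h1.symm
  rw [e, MzAux.card_fiber_phi hM, MzAux.cardV p n le_rfl,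
    Finset.filter_true_of_mem (fun i _ => i.isLt), MzAux.prod_aw_eq_wt hM]
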